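/- Let E be the set of all subsets of {1,...,6} of even cardinality, with A + B := A ∪ B (defined iff A ∩ B = ∅) and A' := {1,...,6} \ A, forming an effect algebra whose induced order is set inclusion. For all A,B ∈ E, with A→B := A' + L(A,B) := {A' ∪ C : C ∈ E, C ⊆ A ∩ B}, one has A→B = {D ∈ E : A' ⊆ D ⊆ A' ∪ B}. -/

import Mathlib

namespace Paper

variable {E : Type*}

/-- The lower cone `L(S)` of a subset w.r.t. an order relation. -/
def lcone (le : E → E → Prop) (S : Set E) : Set E := {x | ∀ y ∈ S, le x y}

/-- The upper cone `U(S)` of a subset w.r.t. an order relation. -/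
def ucone (le : E → E → Prop) (S : Set E) : Set E := {x | ∀ y ∈ S, le y x}

/-- `S ≤ T` for subsets: every element of `S` is below every element of `T`. -/
def setLE (le : E → E → Prop) (S T : Set E) : Prop := ∀ x ∈ S, ∀ y ∈ T, le x y

/-- Effect algebra axioms (E1)-(E4); the partial operation `+` is encoded via `Option`
(`add x y = some z` means `x + y` is defined with value `z`). -/
structure IsEffectAlgebra (add : E → E → Option E) (compl : E → E)
    (zero one : E) : Prop where
  /-- (E1) -/
  comm : ∀ x y, add x y = add y x
  /-- (E2) -/
  assoc : ∀ x y z, (add x y).bind (fun u => add u z) = (add y z).bind (fun v => add x v)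
  /-- (E3): `x'` is the unique `u` with `x + u = 1`. -/
  compl_iff : ∀ x u, add x u = some one ↔ u = compl x
  /-- (E4) -/
  one_add : ∀ x y, add one x = some y → x = zero

/-- The induced order: `x ≤ y` iff there is `z` with `x + z = y`. -/
def eaLe (add : E → E → Option E) (x y : E) : Prop := ∃ z, add x z = some y

/-- `x + A := {x + a : a ∈ A}`. -/
def addLSet (add : E → E → Option E) (x : E) (S : Set E) : Set E :=
  {z | ∃ a ∈ S, add x a = some z}

/-- `A + x := {a + x : a ∈ A}`. -/
def addRSet (add : E → E → Option E) (S : Set E) (x : E) : Set E :=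
  {z | ∃ a ∈ S, add a x = some z}

/-- A monotonous effect algebra: for every `x` and nonempty `A`, `B`, if `A ∪ B ≤ x'`
and `L(A) ≤ U(B)`, then `L(x + A) ≤ U(x + B)`. -/
def Monotonous (add : E → E → Option E) (compl : E → E) : Prop :=
  ∀ (x : E) (A B : Set E), A.Nonempty → B.Nonempty →
    (∀ a ∈ A ∪ B, eaLe add a (compl x)) →
    setLE (eaLe add) (lcone (eaLe add) A) (ucone (eaLe add) B) →
    setLE (eaLe add) (lcone (eaLe add) (addLSet add x A)) (ucone (eaLe add) (addLSet add x B))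

/-- The multiplication `x ⊙ y := (x' + y')'` derived from an effect algebra
(defined iff `x' + y'` is, i.e. iff `x' ≤ y`). -/
def eaOdot (add : E → E → Option E) (compl : E → E) (x y : E) : Option E :=
  (add (compl x) (compl y)).map compl

/-- The implication `x → y := x' + L(x,y)` derived from an effect algebra. -/
def eaImp (add : E → E → Option E) (compl : E → E) (x y : E) : Set E :=
  addLSet add (compl x) (lcone (eaLe add) {x, y})

/-- `S ⊙ y := {s ⊙ y : s ∈ S}`. -/
def odotLSet (odot : E → E → Option E) (S : Set E) (y : E) : Set E :=
  {w | ∃ s ∈ S, odot s y = some w}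

/-- `y ⊙ S := {y ⊙ s : s ∈ S}`. -/
def odotRSet (odot : E → E → Option E) (y : E) (S : Set E) : Set E :=
  {w | ∃ s ∈ S, odot y s = some w}

/-- Commutative unsharp residuated poset, axioms (C1)-(C4); `⊙` is a partial
operation encoded via `Option` and `→` maps pairs to subsets. -/
structure IsCURP (le : E → E → Prop) (odot : E → E → Option E) (imp : E → E → Set E)
    (compl : E → E) (zero one : E) : Prop where
  /-- (C1): bounded poset … -/
  le_refl : ∀ x, le x x
  le_antisymm : ∀ x y, le x y → le y x → x = y
  le_trans : ∀ x y z, le x y → le y z → le x z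
  zero_le : ∀ x, le zero x
  le_one : ∀ x, le x one
  /-- (C1): … with an antitone involution. -/
  compl_compl : ∀ x, compl (compl x) = x
  compl_antitone : ∀ x y, le x y → le (compl y) (compl x)
  /-- (C2): `x ⊙ y` is defined iff `x' ≤ y`. -/
  odot_defined : ∀ x y, (odot x y).isSome ↔ le (compl x) y
  /-- (C2): partial commutative monoid. -/
  odot_comm : ∀ x y, odot x y = odot y x
  odot_assoc : ∀ x y z, (odot x y).bind (fun u => odot u z) = (odot y z).bind (fun v => odot x v)
  odot_one : ∀ x, odot x one = some x
  one_odot : ∀ x, odot one x = some x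
  /-- (C2): `z' ≤ x ≤ y` implies `x ⊙ z ≤ y ⊙ z`. -/
  odot_mono : ∀ x y z a b, le (compl z) x → le x y →
    odot x z = some a → odot y z = some b → le a b
  /-- (C3): unsharp adjointness. -/
  adjoint : ∀ x y z,
    setLE le (lcone le (odotLSet odot (ucone le {x, compl y}) y))
      (ucone le (lcone le {y, z})) ↔
    setLE le (lcone le (ucone le {x, compl y})) (ucone le (imp y z))
  /-- (C4) -/
  imp_zero : ∀ x, imp x zero = {compl x}

/-- Divisibility: `x ≤ y` implies `y ⊙ (y → x) = L(x)`. -/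
def CURPDivisible (le : E → E → Prop) (odot : E → E → Option E)
    (imp : E → E → Set E) : Prop :=
  ∀ x y, le x y → odotRSet odot y (imp y x) = lcone le {x}

/-- Pseudoeffect algebra axioms (P1)-(P4); `x̄ = lc x`, `x̃ = rc x`. -/
structure IsPEA (add : E → E → Option E) (lc rc : E → E) (zero one : E) : Prop where
  /-- (P1): if `x + y` is defined then `u + x = x + y` for some `u` … -/
  exists_left : ∀ x y z, add x y = some z → ∃ u, add u x = some z
  /-- (P1): … and `y + w = x + y` for some `w`. -/
  exists_right : ∀ x y z, add x y = some z → ∃ w, add y w = some z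
  /-- (P2) -/
  assoc : ∀ x y z, (add x y).bind (fun u => add u z) = (add y z).bind (fun v => add x v)
  /-- (P3): `x̄` is the unique `u` with `u + x = 1`. -/
  lc_iff : ∀ x u, add u x = some one ↔ u = lc x
  /-- (P3): `x̃` is the unique `w` with `x + w = 1`. -/
  rc_iff : ∀ x w, add x w = some one ↔ w = rc x
  /-- (P4) -/
  one_add : ∀ x y, add one x = some y → x = zero
  add_one : ∀ x y, add x one = some y → x = zero

/-- A pseudoeffect algebra is good if `(x̄ + ȳ)˜ = (x̃ + ỹ)‾` whenever `x̃ ≤ y`. -/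
def Good (add : E → E → Option E) (lc rc : E → E) : Prop :=
  ∀ x y, eaLe add (rc x) y →
    (add (lc x) (lc y)).map rc = (add (rc x) (rc y)).map lc

/-- A monotonous pseudoeffect algebra. -/
def PEAMonotonous (add : E → E → Option E) (lc rc : E → E) : Prop :=
  (∀ (x : E) (A B : Set E), A.Nonempty → B.Nonempty →
    (∀ a ∈ A ∪ B, eaLe add a (lc x)) →
    setLE (eaLe add) (lcone (eaLe add) A) (ucone (eaLe add) B) →
    setLE (eaLe add) (lcone (eaLe add) (addRSet add A x))
      (ucone (eaLe add) (addRSet add B x))) ∧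
  (∀ (x : E) (A B : Set E), A.Nonempty → B.Nonempty →
    (∀ a ∈ A ∪ B, eaLe add a (rc x)) →
    setLE (eaLe add) (lcone (eaLe add) A) (ucone (eaLe add) B) →
    setLE (eaLe add) (lcone (eaLe add) (addLSet add x A))
      (ucone (eaLe add) (addLSet add x B)))

/-- The multiplication `x ⊙ y := (x̄ + ȳ)˜` derived from a pseudoeffect algebra. -/
def peaOdot (add : E → E → Option E) (lc rc : E → E) (x y : E) : Option E :=
  (add (lc x) (lc y)).map rc

/-- The implication `x → y := x̄ + L(x,y)` derived from a pseudoeffect algebra. -/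
def peaImp (add : E → E → Option E) (lc : E → E) (x y : E) : Set E :=
  {z | ∃ c ∈ lcone (eaLe add) {x, y}, add (lc x) c = some z}

/-- The implication `x ⇝ y := L(x,y) + x̃` derived from a pseudoeffect algebra. -/
def peaImpW (add : E → E → Option E) (rc : E → E) (x y : E) : Set E :=
  {z | ∃ c ∈ lcone (eaLe add) {x, y}, add c (rc x) = some z}

/-- Unsharp residuated poset, axioms (R1)-(R7); `x̄ = lc x`, `x̃ = rc x`. -/
structure IsURP (le : E → E → Prop) (odot : E → E → Option E)
    (imp impW : E → E → Set E) (lc rc : E → E) (zero one : E) : Prop where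
  /-- (R1): bounded poset. -/
  le_refl : ∀ x, le x x
  le_antisymm : ∀ x y, le x y → le y x → x = y
  le_trans : ∀ x y z, le x y → le y z → le x z
  zero_le : ∀ x, le zero x
  le_one : ∀ x, le x one
  /-- (R2) -/
  rc_lc : ∀ x, rc (lc x) = x
  lc_rc : ∀ x, lc (rc x) = x
  lc_antitone : ∀ x y, le x y → le (lc y) (lc x)
  rc_antitone : ∀ x y, le x y → le (rc y) (rc x)
  /-- (R3): `x ⊙ y` is defined iff `x̃ ≤ y`. -/
  odot_defined : ∀ x y, (odot x y).isSome ↔ le (rc x) y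
  /-- (R3): partial monoid. -/
  odot_assoc : ∀ x y z, (odot x y).bind (fun u => odot u z) = (odot y z).bind (fun v => odot x v)
  odot_one : ∀ x, odot x one = some x
  one_odot : ∀ x, odot one x = some x
  /-- (R3): `z̄ ≤ x ≤ y` implies `x ⊙ z ≤ y ⊙ z`. -/
  odot_rmono : ∀ x y z a b, le (lc z) x → le x y →
    odot x z = some a → odot y z = some b → le a b
  /-- (R3): `z̃ ≤ x ≤ y` implies `z ⊙ x ≤ z ⊙ y`. -/
  odot_lmono : ∀ x y z a b, le (rc z) x → le x y →
    odot z x = some a → odot z y = some b → le a b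
  /-- (R4) -/
  adjoint_r : ∀ x y z,
    setLE le (lcone le (odotLSet odot (ucone le {x, lc y}) y))
      (ucone le (lcone le {y, z})) ↔
    setLE le (lcone le (ucone le {x, lc y})) (ucone le (imp y z))
  /-- (R5) -/
  adjoint_l : ∀ x y z,
    setLE le (lcone le (odotRSet odot y (ucone le {x, rc y})))
      (ucone le (lcone le {y, z})) ↔
    setLE le (lcone le (ucone le {x, rc y})) (ucone le (impW y z))
  /-- (R6) -/
  imp_zero : ∀ x, imp x zero = {lc x}
  impW_zero : ∀ x, impW x zero = {rc x}
  /-- (R7) -/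
  compat : ∀ x y, (odot (lc x) (lc y)).map rc = (odot (rc x) (rc y)).map lc

/-- The even-cardinality subsets of `{1,…,6}`. -/
def EvenSet : Type := {A : Finset (Fin 6) // Even A.card}

/-- `A + B := A ∪ B`, defined iff `A ∩ B = ∅`. -/
def evAdd (A B : EvenSet) : Option EvenSet :=
  if h : A.1 ∩ B.1 = ∅ then
    some ⟨A.1 ∪ B.1, by
      rw [Finset.card_union_of_disjoint (Finset.disjoint_iff_inter_eq_empty.mpr h)]
      exact A.2.add B.2⟩
  else none

/-- `A' := {1,…,6} \ A`. -/
def evCompl (A : EvenSet) : EvenSet :=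
  ⟨Finset.univ \ A.1, by
    obtain ⟨r, hr⟩ := A.2
    have h1 : A.1 ⊆ Finset.univ := Finset.subset_univ _
    have h2 : A.1.card ≤ 6 := by
      simpa using Finset.card_le_card h1
    rw [Finset.card_sdiff, Finset.inter_univ, Finset.card_univ, Fintype.card_fin]
    exact ⟨3 - r, by omega⟩⟩

def evZero : EvenSet := ⟨∅, by simp⟩

def evOne : EvenSet := ⟨Finset.univ, by
  rw [Finset.card_univ, Fintype.card_fin]; exact ⟨3, rfl⟩⟩

lemma evLe_iff (X Y : EvenSet) : eaLe evAdd X Y ↔ X.1 ⊆ Y.1 := by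
  constructor
  · rintro ⟨Z, hZ⟩
    unfold evAdd at hZ
    split_ifs at hZ with h
    · have : X.1 ∪ Z.1 = Y.1 := by obtain rfl := Option.some.inj hZ; rfl
      rw [← this]; exact Finset.subset_union_left
  · intro h
    have hsub : X.1 ⊆ Y.1 := h
    have hcard : X.1.card ≤ Y.1.card := Finset.card_le_card hsub
    have heven : Even (Y.1 \ X.1).card := by
      rw [Finset.card_sdiff, Finset.inter_eq_left.mpr hsub]
      obtain ⟨a, ha⟩ := X.2; obtain ⟨b, hb⟩ := Y.2
      exact ⟨b - a, by omega⟩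
    refine ⟨⟨Y.1 \ X.1, heven⟩, ?_⟩
    unfold evAdd
    rw [dif_pos (by simp [Finset.inter_sdiff_self])]
    exact congrArg some (Subtype.ext (by simp [Finset.union_sdiff_of_subset hsub]))

/-- In the effect algebra of even-cardinality subsets of `{1,…,6}`:
`A → B = {D ∈ E : A' ⊆ D ⊆ A' ∪ B}`. -/
theorem stmt9 :
    ∀ A B : EvenSet,
      eaImp evAdd evCompl A B
        = {D : EvenSet | (evCompl A).1 ⊆ D.1 ∧ D.1 ⊆ (evCompl A).1 ∪ B.1} := by
  intro A B
  ext D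
  simp only [eaImp, addLSet, lcone, Set.mem_setOf_eq, Set.mem_insert_iff,
    Set.mem_singleton_iff]
  constructor
  · rintro ⟨C, hC, hadd⟩
    have hCA : C.1 ⊆ A.1 := (evLe_iff C A).mp (hC A (Or.inl rfl))
    have hCB : C.1 ⊆ B.1 := (evLe_iff C B).mp (hC B (Or.inr rfl))
    unfold evAdd at hadd
    split_ifs at hadd with h
    have hD : (evCompl A).1 ∪ C.1 = D.1 := by obtain rfl := Option.some.inj hadd; rfl
    constructor
    · rw [← hD]; exact Finset.subset_union_left
    · rw [← hD]; exact Finset.union_subset_union_right hCB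
  · rintro ⟨h1, h2⟩
    have hcard : (evCompl A).1.card ≤ D.1.card := Finset.card_le_card h1
    have heven : Even (D.1 \ (evCompl A).1).card := by
      rw [Finset.card_sdiff, Finset.inter_eq_left.mpr h1]
      obtain ⟨a, ha⟩ := (evCompl A).2; obtain ⟨b, hb⟩ := D.2
      exact ⟨b - a, by omega⟩
    refine ⟨⟨D.1 \ (evCompl A).1, heven⟩, ?_, ?_⟩
    · intro y hy
      refine (evLe_iff _ _).mpr ?_
      rcases hy with rfl | rfl
      · intro x hx
        simp only [Finset.mem_sdiff, evCompl, Finset.mem_sdiff, Finset.mem_univ,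
          true_and, not_not] at hx
        exact hx.2
      · intro x hx
        simp only [Finset.mem_sdiff] at hx
        rcases Finset.mem_union.mp (h2 hx.1) with h | h
        · exact absurd h hx.2
        · exact h
    · unfold evAdd
      rw [dif_pos (by simp [Finset.inter_sdiff_self])]
      exact congrArg some (Subtype.ext (by simp [Finset.union_sdiff_of_subset h1]))

end Paper
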